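/- Let F be a field with char F ≠ 2 and char F ≠ 3, let α₁,α₄ ∈ F with α₄ ≠ 0, and let A = A₆(α₁,α₄) = [[α₁, 0, 0, α₄],[1, 1-α₁, -α₁, 0]]. Then the only invertible 2×2 matrix g over F with gA = A(g⊗g) is the identity matrix, and the only 2×2 matrix D with DA = A(D⊗I₂ + I₂⊗D) is the zero matrix. -/
import Mathlib


open Matrix Kronecker

/-- The matrix of structure constants (MSC) of a 2-dimensional algebra, as a
`2 × (2 × 2)` matrix: the column indexed by `(j,k)` corresponds to the product
`e_j · e_k`, so the columns in order `(0,0), (0,1), (1,0), (1,1)` carry the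
entries `α₁ α₂ α₃ α₄` (first row) and `β₁ β₂ β₃ β₄` (second row). -/
def MSC {F : Type*} [Field F] (a1 a2 a3 a4 b1 b2 b3 b4 : F) :
    Matrix (Fin 2) (Fin 2 × Fin 2) F :=
  Matrix.of fun i j => !![a1, a2, a3, a4; b1, b2, b3, b4] i (finProdFinEquiv j)

/-- `g` is an automorphism matrix of the algebra with MSC `A`:
`g` is invertible and `g • A = A • (g ⊗ g)`. -/
def IsAutoMat {F : Type*} [Field F] (A : Matrix (Fin 2) (Fin 2 × Fin 2) F)
    (g : Matrix (Fin 2) (Fin 2) F) : Prop :=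
  IsUnit g ∧ g * A = A * (g ⊗ₖ g)

/-- `D` is a derivation matrix of the algebra with MSC `A`:
`D • A = A • (D ⊗ I + I ⊗ D)`. -/
def IsDerMat {F : Type*} [Field F] (A : Matrix (Fin 2) (Fin 2 × Fin 2) F)
    (D : Matrix (Fin 2) (Fin 2) F) : Prop :=
  D * A = A * (D ⊗ₖ (1 : Matrix (Fin 2) (Fin 2) F) + (1 : Matrix (Fin 2) (Fin 2) F) ⊗ₖ D)

section Aux
variable {F : Type*} [Field F] (a1 a2 a3 a4 b1 b2 b3 b4 : F)
lemma msc1 : MSC a1 a2 a3 a4 b1 b2 b3 b4 0 (0,0) = a1 := rfl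
lemma msc2 : MSC a1 a2 a3 a4 b1 b2 b3 b4 0 (0,1) = a2 := rfl
lemma msc3 : MSC a1 a2 a3 a4 b1 b2 b3 b4 0 (1,0) = a3 := rfl
lemma msc4 : MSC a1 a2 a3 a4 b1 b2 b3 b4 0 (1,1) = a4 := rfl
lemma msc5 : MSC a1 a2 a3 a4 b1 b2 b3 b4 1 (0,0) = b1 := rfl
lemma msc6 : MSC a1 a2 a3 a4 b1 b2 b3 b4 1 (0,1) = b2 := rfl
lemma msc7 : MSC a1 a2 a3 a4 b1 b2 b3 b4 1 (1,0) = b3 := rfl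
lemma msc8 : MSC a1 a2 a3 a4 b1 b2 b3 b4 1 (1,1) = b4 := rfl
end Aux

theorem stmt_7 {F : Type*} [Field F] (h2 : ringChar F ≠ 2) (h3 : ringChar F ≠ 3)
    (a1 a4 : F) (ha4 : a4 ≠ 0)
    (A : Matrix (Fin 2) (Fin 2 × Fin 2) F)
    (hA : A = MSC a1 0 0 a4 1 (1 - a1) (-a1) 0) :
    (∀ g : Matrix (Fin 2) (Fin 2) F, IsAutoMat A g ↔ g = 1) ∧
    (∀ D : Matrix (Fin 2) (Fin 2) F, IsDerMat A D ↔ D = 0) := by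
  subst hA
  have h2' : (2 : F) ≠ 0 := Ring.two_ne_zero h2
  constructor
  · intro g
    constructor
    · rintro ⟨hu, h⟩
      rw [← Matrix.ext_iff] at h
      simp only [Fin.forall_fin_two, Prod.forall, Matrix.mul_apply, Fintype.sum_prod_type,
        Fin.sum_univ_two, Matrix.kroneckerMap_apply,
        msc1, msc2, msc3, msc4, msc5, msc6, msc7, msc8] at h
      obtain ⟨⟨⟨E1, E2⟩, E3, E4⟩, ⟨E5, E6⟩, E7, E8⟩ := h
      have hb : g 0 1 = 0 := by linear_combination E2 - E3
      have hc4 : g 1 0 * a4 = 0 := by linear_combination E8 + (g 1 1 - 2 * a1 * g 1 1 + g 0 1) * hb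
      have hc : g 1 0 = 0 := (mul_eq_zero.mp hc4).resolve_right ha4
      have had : g 0 0 * g 1 1 = g 1 1 := by
        linear_combination E7 - E6 + g 1 0 * hb
      have hda : g 1 1 = g 0 0 * g 0 0 := by
        linear_combination E5 - (a1 - g 0 0 + 2 * a1 * g 0 0) * hc
      have hdet : g 0 0 * g 1 1 - g 0 1 * g 1 0 ≠ 0 := by
        have := isUnit_iff_ne_zero.mp ((Matrix.isUnit_iff_isUnit_det g).mp hu)
        rwa [Matrix.det_fin_two] at this
      rw [hb, hc] at hdet
      have hadne : g 0 0 * g 1 1 ≠ 0 := by simpa using hdet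
      have hd0 : g 1 1 ≠ 0 := right_ne_zero_of_mul hadne
      have ha1 : g 0 0 = 1 := by
        have : g 0 0 * g 1 1 = 1 * g 1 1 := by rw [one_mul]; exact had
        exact mul_right_cancel₀ hd0 this
      have hd1 : g 1 1 = 1 := by rw [hda, ha1, one_mul]
      rw [Matrix.eta_fin_two g, ha1, hb, hc, hd1, ← Matrix.one_fin_two]
    · rintro rfl
      exact ⟨isUnit_one, by rw [Matrix.one_kronecker_one]; rw [Matrix.one_mul, Matrix.mul_one]⟩
  · intro D
    constructor
    · intro h
      rw [IsDerMat, ← Matrix.ext_iff] at h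
      simp only [Fin.forall_fin_two, Prod.forall, Matrix.mul_apply, Fintype.sum_prod_type,
        Fin.sum_univ_two, Matrix.kroneckerMap_apply, Matrix.add_apply, Matrix.one_apply,
        msc1, msc2, msc3, msc4, msc5, msc6, msc7, msc8] at h
      simp only [show ((0:Fin 2) = 1) = False by simp, show ((1:Fin 2) = 0) = False by simp,
        if_true, if_false, eq_self_iff_true] at h
      obtain ⟨⟨⟨G1, G2⟩, G3, G4⟩, ⟨G5, G6⟩, G7, G8⟩ := h
      have ha : D 0 0 = 0 := by linear_combination -G1 - G6
      have hb : D 0 1 = 0 := by linear_combination G1 + a1 * ha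
      have hd4 : a4 * (2 * D 1 1) = 0 := by linear_combination -G4 + a4 * ha
      have hd : D 1 1 = 0 := by
        have h2d := (mul_eq_zero.mp hd4).resolve_left ha4
        exact (mul_eq_zero.mp h2d).resolve_left h2'
      have hc4 : a4 * D 1 0 = 0 := by linear_combination -G3 - 2 * a1 * hb
      have hc : D 1 0 = 0 := (mul_eq_zero.mp hc4).resolve_left ha4
      rw [Matrix.eta_fin_two D, ha, hb, hc, hd]
      ext i j
      fin_cases i <;> fin_cases j <;> simp
    · rintro rfl
      rw [IsDerMat]
      simp
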